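/- Let w ∈ BV((0,1)) be left-continuous, and for N ∈ ℕ define the step function w^N by w^N(x) = N·∫_{(k-1)/N}^{k/N} w(y) dy for x ∈ [(k-1)/N, k/N). Then ‖w - w^N‖²_{L²((0,1))} ≤ (1/N)·TV(w)², where TV(w) = |Dw|((0,1)) is the total variation of w. -/

import Mathlib

open MeasureTheory Filter

/-- `L²` error of the piecewise-average approximation of a left-continuous `BV`
function on `(0,1)`: with `w^N` the step function of averages on the uniform
partition into `N` pieces, `‖w - w^N‖²_{L²((0,1))} ≤ (1/N)·TV(w)²`. -/
theorem bv_piecewise_average_L2_error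
    (w : ℝ → ℝ)
    (hBV : BoundedVariationOn w (Set.Ioo 0 1))
    (hlc : ∀ x ∈ Set.Ioo (0:ℝ) 1,
      Tendsto w (nhdsWithin x (Set.Iio x)) (nhds (w x)))
    (N : ℕ) (hN : 0 < N)
    (wN : ℝ → ℝ)
    (hwN : ∀ x : ℝ, wN x =
      (N : ℝ) * ∫ y in Set.Ico ((⌊(N : ℝ) * x⌋ : ℝ) / N)
        (((⌊(N : ℝ) * x⌋ : ℝ) + 1) / N), w y) :
    (∫ x in Set.Ioo (0:ℝ) 1, (w x - wN x) ^ 2) ≤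
      (1 / N) * ((eVariationOn w (Set.Ioo 0 1)).toReal) ^ 2 := by
  clear hlc
  have hNpos : (0:ℝ) < N := by exact_mod_cast hN
  set V : ENNReal := eVariationOn w (Set.Ioo 0 1) with hV
  set T : ℝ := V.toReal with hT
  have hVlt : V < ⊤ := lt_top_iff_ne_top.2 hBV
  set J : ℕ → Set ℝ := fun k => Set.Ico ((k:ℝ)/N) (((k:ℝ)+1)/N) ∩ Set.Ioo 0 1 with hJ
  have hJsub : ∀ k, J k ⊆ Set.Ioo 0 1 := fun k => Set.inter_subset_right
  have hJmeas : ∀ k, MeasurableSet (J k) := fun k =>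
    measurableSet_Ico.inter measurableSet_Ioo
  set e : ℕ → ENNReal := fun k => eVariationOn w (J k) with he
  have hek : ∀ k, e k ≤ V := fun k => eVariationOn.mono w (hJsub k)
  have hekfin : ∀ k, e k ≠ ⊤ := fun k => ((hek k).trans_lt hVlt).ne
  -- a.e. equality of `Ico` blocks with their intersection with `(0,1)`
  have hJae : ∀ k, k < N →
      (Set.Ico ((k:ℝ)/N) (((k:ℝ)+1)/N) : Set ℝ) =ᵐ[volume] J k := by
    intro k hk
    have h0 : ∀ᵐ x : ℝ, x ≠ (0:ℝ) := by
      rw [ae_iff]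
      simpa using measure_singleton (0:ℝ)
    rw [Filter.eventuallyEq_set]
    filter_upwards [h0] with x hx
    simp only [hJ, Set.mem_inter_iff, Set.mem_Ico, Set.mem_Ioo]
    constructor
    · rintro ⟨h1, h2⟩
      refine ⟨⟨h1, h2⟩, ?_, ?_⟩
      · rcases (div_nonneg (k.cast_nonneg) hNpos.le).trans h1 |>.lt_or_eq with h | h
        · exact h
        · exact absurd h.symm hx
      · calc x < ((k:ℝ)+1)/N := h2
          _ ≤ (N:ℝ)/N := by gcongr; exact_mod_cast hk
          _ = 1 := div_self hNpos.ne'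
    · rintro ⟨h1, _⟩
      exact h1
  have hμJ : ∀ k, k < N → volume (J k) = ENNReal.ofReal (1/N) := by
    intro k hk
    rw [← measure_congr (hJae k hk), Real.volume_Ico]
    congr 1
    field_simp
    ring
  have hμJlt : ∀ k, volume (J k) < ⊤ := by
    intro k
    exact (measure_mono (hJsub k)).trans_lt (by simp [Real.volume_Ioo])
  have hμJreal : ∀ k, k < N → (volume (J k)).toReal = 1/N := by
    intro k hk
    rw [hμJ k hk, ENNReal.toReal_ofReal (by positivity)]
  -- distance bound from variation
  have key_dist : ∀ {s : Set ℝ}, s ⊆ Set.Ioo 0 1 → ∀ x ∈ s, ∀ y ∈ s,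
      |w x - w y| ≤ (eVariationOn w s).toReal := by
    intro s hs x hx y hy
    have h1 := eVariationOn.edist_le w hx hy
    have hfin : eVariationOn w s ≠ ⊤ := ((eVariationOn.mono w hs).trans_lt hVlt).ne
    rw [edist_dist, Real.dist_eq] at h1
    have h2 := ENNReal.toReal_mono hfin h1
    rwa [ENNReal.toReal_ofReal (abs_nonneg _)] at h2
  -- measurability and integrability of w on (0,1)
  have hw_meas : AEMeasurable w (volume.restrict (Set.Ioo (0:ℝ) 1)) := by
    obtain ⟨p, q, hp, hq, hpq⟩ :=
      hBV.locallyBoundedVariationOn.exists_monotoneOn_sub_monotoneOn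
    rw [hpq]
    exact (aemeasurable_restrict_of_monotoneOn measurableSet_Ioo hp).sub
      (aemeasurable_restrict_of_monotoneOn measurableSet_Ioo hq)
  have hhalf : (1/2 : ℝ) ∈ Set.Ioo (0:ℝ) 1 := by norm_num
  have hwbnd : ∀ x ∈ Set.Ioo (0:ℝ) 1, |w x| ≤ |w (1/2)| + T := by
    intro x hx
    calc |w x| = |(w x - w (1/2)) + w (1/2)| := by ring_nf
      _ ≤ |w x - w (1/2)| + |w (1/2)| := abs_add_le _ _
      _ ≤ T + |w (1/2)| := by
          gcongr
          exact key_dist (le_refl _) x hx (1/2) hhalf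
      _ = |w (1/2)| + T := by ring
  have hwint : IntegrableOn w (Set.Ioo (0:ℝ) 1) := by
    apply Integrable.mono' (g := fun _ => |w (1/2)| + T)
      (integrableOn_const (by simp [Real.volume_Ioo]))
      hw_meas.aestronglyMeasurable
    filter_upwards [ae_restrict_mem measurableSet_Ioo] with x hx
    simpa [Real.norm_eq_abs] using hwbnd x hx
  have hwintJ : ∀ k, IntegrableOn w (J k) := fun k => hwint.mono_set (hJsub k)
  -- measurability of wN
  have hwNmeas : Measurable wN := by
    have hrw : wN = fun x => (N:ℝ) *
        (fun k : ℤ => ∫ y in Set.Ico ((k:ℝ)/N) (((k:ℝ)+1)/N), w y) ⌊(N:ℝ)*x⌋ := by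
      funext x; exact hwN x
    rw [hrw]
    have h1 : Measurable fun x : ℝ => ⌊(N:ℝ)*x⌋ := by
      apply Int.measurable_floor.comp
      exact measurable_const.mul measurable_id
    have h2 : Measurable ((fun k : ℤ => ∫ y in Set.Ico ((k:ℝ)/N) (((k:ℝ)+1)/N), w y) ∘
        fun x : ℝ => ⌊(N:ℝ)*x⌋) := measurable_from_top.comp h1
    exact h2.const_mul (N:ℝ)
  -- floor identification on blocks
  have hfloor : ∀ k, k < N → ∀ x ∈ J k, ⌊(N:ℝ)*x⌋ = (k:ℤ) := by
    intro k hk x hx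
    obtain ⟨⟨h1, h2⟩, _⟩ := hx
    rw [Int.floor_eq_iff]
    constructor
    · push_cast
      calc (k:ℝ) = N * ((k:ℝ)/N) := by field_simp
        _ ≤ N * x := by gcongr
    · push_cast
      calc (N:ℝ) * x < N * (((k:ℝ)+1)/N) := by gcongr
        _ = (k:ℝ) + 1 := by field_simp
  -- key pointwise bound
  have hkey : ∀ k, k < N → ∀ x ∈ J k, |w x - wN x| ≤ (e k).toReal := by
    intro k hk x hx
    have hwNx : wN x = (N:ℝ) * ∫ y in J k, w y := by
      rw [hwN x, hfloor k hk x hx]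
      congr 1
      push_cast
      exact setIntegral_congr_set (hJae k hk)
    have hci : IntegrableOn (fun _ : ℝ => w x) (J k) :=
      integrableOn_const (hμJlt k).ne
    have hsub : w x - wN x = (N:ℝ) * ∫ y in J k, (w x - w y) := by
      rw [integral_sub hci (hwintJ k), setIntegral_const, measureReal_def, hμJreal k hk, hwNx,
        smul_eq_mul]
      field_simp
    rw [hsub, abs_mul, abs_of_nonneg hNpos.le]
    have hmeas : AEStronglyMeasurable (fun y => w x - w y)
        (volume.restrict (J k)) :=
      (aemeasurable_const.sub
        (hw_meas.mono_measure (Measure.restrict_mono (hJsub k) le_rfl))).aestronglyMeasurable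
    have hbound := norm_setIntegral_le_of_norm_le_const (μ := volume)
      (hμJlt k) (C := (e k).toReal)
      (fun y hy => by
        rw [Real.norm_eq_abs]
        exact key_dist (hJsub k) x hx y hy)
    rw [measureReal_def, hμJreal k hk, Real.norm_eq_abs] at hbound
    calc (N:ℝ) * |∫ y in J k, (w x - w y)| ≤ (N:ℝ) * ((e k).toReal * (1/N)) := by
          gcongr
      _ = (e k).toReal := by field_simp
  -- decomposition of (0,1) into blocks
  have hunion : Set.Ioo (0:ℝ) 1 = ⋃ k ∈ Finset.range N, J k := by
    apply Set.Subset.antisymm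
    · intro x hx
      obtain ⟨hx0, hx1⟩ := hx
      have hnn : (0:ℤ) ≤ ⌊(N:ℝ)*x⌋ := Int.floor_nonneg.2 (by positivity)
      set k : ℕ := ⌊(N:ℝ)*x⌋.toNat with hkdef
      have hcast : ((k:ℕ):ℝ) = ((⌊(N:ℝ)*x⌋ : ℤ) : ℝ) := by
        rw [hkdef]; exact_mod_cast congrArg (fun z : ℤ => (z:ℝ)) (Int.toNat_of_nonneg hnn)
      have hkN : k < N := by
        have : ⌊(N:ℝ)*x⌋ < (N:ℤ) := by
          rw [Int.floor_lt]
          push_cast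
          calc (N:ℝ) * x < N * 1 := by gcongr
            _ = N := by ring
        omega
      refine Set.mem_biUnion (Finset.mem_range.2 hkN) ?_
      refine ⟨⟨?_, ?_⟩, hx0, hx1⟩
      · rw [div_le_iff₀ hNpos, mul_comm, hcast]
        exact Int.floor_le _
      · rw [lt_div_iff₀ hNpos, mul_comm, hcast]
        exact_mod_cast Int.lt_floor_add_one ((N:ℝ)*x)
    · exact Set.iUnion₂_subset fun k _ => hJsub k
  have hdisj : Set.Pairwise ↑(Finset.range N) (Function.onFun Disjoint J) := by
    have hd : ∀ a b : ℕ, a < b → Disjoint (J a) (J b) := by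
      intro a b hab
      apply Disjoint.mono Set.inter_subset_left Set.inter_subset_left
      rw [Set.Ico_disjoint_Ico]
      apply min_le_of_left_le
      apply le_max_of_le_right
      gcongr
      exact_mod_cast hab
    intro a _ b _ hab
    rcases hab.lt_or_gt with h | h
    · exact hd a b h
    · exact (hd b a h).symm
  -- integrability of the squared error on each block
  have hgmeas : AEStronglyMeasurable (fun x => (w x - wN x)^2)
      (volume.restrict (Set.Ioo (0:ℝ) 1)) :=
    ((hw_meas.sub hwNmeas.aemeasurable).pow_const 2).aestronglyMeasurable
  have hgint : ∀ k, k < N → IntegrableOn (fun x => (w x - wN x)^2) (J k) := by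
    intro k hk
    apply Integrable.mono' (g := fun _ => ((e k).toReal)^2)
      (integrableOn_const (hμJlt k).ne)
      (hgmeas.mono_measure (Measure.restrict_mono (hJsub k) le_rfl))
    filter_upwards [ae_restrict_mem (hJmeas k)] with x hx
    rw [Real.norm_eq_abs, abs_pow]
    exact pow_le_pow_left₀ (abs_nonneg _) (hkey k hk x hx) 2
  -- per-block integral bound
  have hIk : ∀ k, k < N → (∫ x in J k, (w x - wN x)^2) ≤ (1/N) * ((e k).toReal)^2 := by
    intro k hk
    calc (∫ x in J k, (w x - wN x)^2)
        ≤ ∫ _x in J k, ((e k).toReal)^2 := by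
          apply setIntegral_mono_on (hgint k hk)
            (integrableOn_const (hμJlt k).ne) (hJmeas k)
          intro x hx
          rw [← sq_abs]
          exact pow_le_pow_left₀ (abs_nonneg _) (hkey k hk x hx) 2
      _ = (1/N) * ((e k).toReal)^2 := by
          rw [setIntegral_const, measureReal_def, hμJreal k hk, smul_eq_mul]
  -- superadditivity of variation over the blocks
  have hsup : ∀ m : ℕ, m ≤ N →
      (∑ k ∈ Finset.range m, e k) ≤
        eVariationOn w (Set.Ico 0 ((m:ℝ)/N) ∩ Set.Ioo 0 1) := by
    intro m
    induction m with
    | zero => intro _; simp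
    | succ m ih =>
      intro hm
      rw [Finset.sum_range_succ]
      have h1 := ih (Nat.le_of_succ_le hm)
      have hle : ∀ x ∈ Set.Ico (0:ℝ) ((m:ℝ)/N) ∩ Set.Ioo 0 1, ∀ y ∈ J m, x ≤ y :=
        fun x hx y hy => (le_of_lt hx.1.2).trans hy.1.1
      have hU : (Set.Ico (0:ℝ) ((m:ℝ)/N) ∩ Set.Ioo 0 1) ∪ J m =
          Set.Ico (0:ℝ) (((m:ℕ)+1:ℝ)/N) ∩ Set.Ioo 0 1 := by
        rw [hJ, ← Set.union_inter_distrib_right]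
        congr 1
        push_cast
        exact Set.Ico_union_Ico_eq_Ico (div_nonneg m.cast_nonneg hNpos.le)
          (by gcongr <;> linarith)
      calc (∑ k ∈ Finset.range m, e k) + e m
          ≤ eVariationOn w (Set.Ico 0 ((m:ℝ)/N) ∩ Set.Ioo 0 1) + e m :=
            add_le_add_left h1 _
        _ ≤ eVariationOn w ((Set.Ico (0:ℝ) ((m:ℝ)/N) ∩ Set.Ioo 0 1) ∪ J m) :=
            eVariationOn.add_le_union w hle
        _ = eVariationOn w (Set.Ico (0:ℝ) (((m:ℕ)+1:ℝ)/N) ∩ Set.Ioo 0 1) := by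
            rw [hU]
        _ = eVariationOn w (Set.Ico (0:ℝ) (((m+1:ℕ):ℝ)/N) ∩ Set.Ioo 0 1) := by
            push_cast; ring_nf
  have hsumV : (∑ k ∈ Finset.range N, e k) ≤ V := by
    refine (hsup N le_rfl).trans (eVariationOn.mono w ?_)
    exact Set.inter_subset_right
  have hsumT : (∑ k ∈ Finset.range N, (e k).toReal) ≤ T := by
    rw [← ENNReal.toReal_sum (fun k _ => hekfin k)]
    exact ENNReal.toReal_mono hVlt.ne hsumV
  -- put everything together
  rw [hunion, integral_biUnion_finset (Finset.range N) (fun k _ => hJmeas k) hdisj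
    (fun k hk => hgint k (Finset.mem_range.1 hk))]
  calc (∑ k ∈ Finset.range N, ∫ x in J k, (w x - wN x)^2)
      ≤ ∑ k ∈ Finset.range N, (1/N) * ((e k).toReal)^2 :=
        Finset.sum_le_sum fun k hk => hIk k (Finset.mem_range.1 hk)
    _ = (1/N) * ∑ k ∈ Finset.range N, ((e k).toReal)^2 := by rw [Finset.mul_sum]
    _ ≤ (1/N) * (∑ k ∈ Finset.range N, (e k).toReal)^2 := by
        gcongr
        exact Finset.sum_sq_le_sq_sum_of_nonneg fun k _ => ENNReal.toReal_nonneg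
    _ ≤ (1/N) * T^2 := by
        gcongr <;> first
          | exact hsumT
          | exact Finset.sum_nonneg fun k _ => ENNReal.toReal_nonneg
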